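/- For any u > 0, the unique solution a ∈ [1, ∞) of a − ln(a) = u + 1 satisfies a > 1 + √(2u) + (2/3)·u. -/

import Mathlib

lemma keyF (s : ℝ) (hs : 0 < s) : Real.exp (s - s^2/6) < 1 + s + s^2/3 := by
  have hF : StrictMonoOn (fun x : ℝ => (1 + x + x^2/3) * Real.exp (x^2/6 - x)) (Set.Ici 0) := by
    apply strictMonoOn_of_deriv_pos (convex_Ici 0)
    · exact (Continuous.mul (by continuity) (Real.continuous_exp.comp (by continuity))).continuousOn
    · intro x hx
      rw [interior_Ici] at hx
      have h1 : HasDerivAt (fun x : ℝ => 1 + x + x^2/3) (1 + 2*x/3) x := by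
        have h := ((hasDerivAt_id' (x := x)).const_add (1:ℝ)).add ((hasDerivAt_pow 2 x).div_const 3)
        refine h.congr_deriv ?_
        norm_num
      have hi : HasDerivAt (fun x : ℝ => x^2/6 - x) (x/3 - 1) x := by
        have h := ((hasDerivAt_pow 2 x).div_const 6).sub (hasDerivAt_id' (x := x))
        refine h.congr_deriv ?_
        norm_num; ring
      have h2 : HasDerivAt (fun x : ℝ => Real.exp (x^2/6 - x))
          (Real.exp (x^2/6 - x) * (x/3 - 1)) x := hi.exp
      have hD : HasDerivAt (fun x : ℝ => (1 + x + x^2/3) * Real.exp (x^2/6 - x)) _ x := h1.mul h2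
      rw [hD.deriv]
      have hexp : 0 < Real.exp (x^2/6 - x) := Real.exp_pos _
      have hx0 : 0 < x := hx
      nlinarith [hexp, pow_pos hx0 3, mul_pos (pow_pos hx0 3) hexp]
  have h : (1:ℝ) < (1 + s + s^2/3) * Real.exp (s^2/6 - s) := by
    have := hF (Set.mem_Ici.mpr (le_refl 0)) (Set.mem_Ici.mpr hs.le) hs
    simpa using this
  have hmul : Real.exp (s - s^2/6) * Real.exp (s^2/6 - s) = 1 := by
    rw [← Real.exp_add]; norm_num
  nlinarith [h, hmul, Real.exp_pos (s^2/6 - s), Real.exp_pos (s - s^2/6)]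

theorem sub_log_solution_lower (u a : ℝ) (hu : 0 < u) (ha : 1 ≤ a)
    (heq : a - Real.log a = u + 1) :
    a > 1 + Real.sqrt (2 * u) + (2 / 3) * u := by
  obtain ⟨s, hsdef⟩ : ∃ s, s = Real.sqrt (2 * u) := ⟨_, rfl⟩
  rw [← hsdef]
  have hs : 0 < s := hsdef ▸ Real.sqrt_pos.mpr (by linarith)
  have hs2 : s^2 = 2*u := hsdef ▸ Real.sq_sqrt (by linarith)
  obtain ⟨b, hb⟩ : ∃ b, b = 1 + s + (2/3)*u := ⟨_, rfl⟩
  rw [← hb]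
  have hb1 : 1 < b := by rw [hb]; linarith
  have hbe : b = 1 + s + s^2/3 := by rw [hb]; linarith
  have hkey := keyF s hs
  have hlogb : s - s^2/6 < Real.log b := by
    rw [← hbe] at hkey
    exact (Real.lt_log_iff_exp_lt (by linarith)).mpr hkey
  have h2 : b - Real.log b < u + 1 := by
    have : s^2/3 + s^2/6 = u := by linarith
    linarith [hlogb, hbe]
  by_contra hle
  push_neg at hle
  have ha0 : 0 < a := lt_of_lt_of_le one_pos ha
  have hb0 : 0 < b := by linarith
  have h3 : Real.log (b/a) ≤ b/a - 1 := Real.log_le_sub_one_of_pos (by positivity)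
  rw [Real.log_div hb0.ne' ha0.ne'] at h3
  have h4 : b/a - 1 ≤ b - a := by
    rw [div_sub_one ha0.ne']
    exact div_le_self (by linarith) ha
  linarith
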